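/- Let n ≥ 3, let Γ be the dihedral group of order 2n, let x = r (the rotation generator, of order n) and y = s·r⁰ (a reflection). Then x·y⁻¹ = y·x⁻¹, and consequently for every real number φ the matrix W = (cos φ) • P_x + (i sin φ) • P_y is unitary; hence the Cayley graph of the dihedral group D_n with generating set {x, y} admits a homogeneous scalar quantum walk. -/

import Mathlib

/-- The permutation matrix of right multiplication by `g`:
`(P_g)_{v,w} = 1` if `v = w * g` and `0` otherwise. -/
def rightMulMatrix {Γ : Type*} [Group Γ] [DecidableEq Γ] (g : Γ) : Matrix Γ Γ ℂ :=
  fun v w => if v = w * g then 1 else 0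

section aux

variable {Γ : Type*} [Group Γ] [DecidableEq Γ] [Fintype Γ]

lemma rmm_mul (g h : Γ) :
    rightMulMatrix g * rightMulMatrix h = rightMulMatrix (h * g) := by
  ext v w
  rw [Matrix.mul_apply]
  unfold rightMulMatrix
  rw [Finset.sum_eq_single (w * h)]
  · simp [mul_assoc]
  · intro b _ hb; simp [hb]
  · simp

lemma rmm_one : rightMulMatrix (1 : Γ) = 1 := by
  ext v w
  simp [rightMulMatrix, Matrix.one_apply, eq_comm]

lemma rmm_star (g : Γ) : star (rightMulMatrix g) = rightMulMatrix g⁻¹ := by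
  ext v w
  simp only [Matrix.star_apply, rightMulMatrix]
  by_cases h : w = v * g
  · simp [h]
  · have h2 : ¬ v = w * g⁻¹ := fun hv => h (by simp [hv])
    simp [h, h2]

lemma key (x y : Γ) (h : y⁻¹ * x = x⁻¹ * y) (φ : ℝ) :
    ((Real.cos φ : ℂ) • rightMulMatrix x +
      (Complex.I * Real.sin φ) • rightMulMatrix y) ∈
      Matrix.unitaryGroup Γ ℂ := by
  rw [Matrix.mem_unitaryGroup_iff]
  have hstar : star ((Real.cos φ : ℂ) • rightMulMatrix x +
      (Complex.I * Real.sin φ) • rightMulMatrix y) =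
      (Real.cos φ : ℂ) • rightMulMatrix x⁻¹ +
      (-(Complex.I * Real.sin φ)) • rightMulMatrix y⁻¹ := by
    simp only [star_add, star_smul, rmm_star, RCLike.star_def, map_mul, Complex.conj_I,
      Complex.conj_ofReal]
    ring_nf
  rw [hstar]
  rw [Matrix.add_mul, Matrix.mul_add, Matrix.mul_add,
    Matrix.smul_mul, Matrix.smul_mul, Matrix.smul_mul, Matrix.smul_mul,
    Matrix.mul_smul, Matrix.mul_smul, Matrix.mul_smul, Matrix.mul_smul,
    rmm_mul, rmm_mul, rmm_mul, rmm_mul, inv_mul_cancel, inv_mul_cancel,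
    rmm_one, h]
  rw [smul_smul, smul_smul, smul_smul, smul_smul]
  have h1 : (Real.cos φ : ℂ) * (Real.cos φ : ℂ) +
      (Complex.I * Real.sin φ) * -(Complex.I * Real.sin φ) = 1 := by
    have hc : (Real.cos φ : ℂ) ^ 2 + (Real.sin φ : ℂ) ^ 2 = 1 := by
      exact_mod_cast Real.cos_sq_add_sin_sq φ
    linear_combination hc - (Real.sin φ : ℂ) ^ 2 * Complex.I_sq
  have h2 : (Real.cos φ : ℂ) * -(Complex.I * Real.sin φ) +
      (Complex.I * Real.sin φ) * (Real.cos φ : ℂ) = 0 := by ring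
  calc _ = ((Real.cos φ : ℂ) * (Real.cos φ : ℂ) +
          (Complex.I * Real.sin φ) * -(Complex.I * Real.sin φ)) • (1 : Matrix Γ Γ ℂ) +
        ((Real.cos φ : ℂ) * -(Complex.I * Real.sin φ) +
          (Complex.I * Real.sin φ) * (Real.cos φ : ℂ)) • rightMulMatrix (x⁻¹ * y) := by
        rw [add_smul, add_smul]; abel
    _ = 1 := by rw [h1, h2]; simp

end aux

/-- In the dihedral group `D_n` (`n ≥ 3`) with `x = r` the rotation generator and
`y = s r⁰` a reflection, we have `x y⁻¹ = y x⁻¹`, and for every `φ` the matrix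
`W = (cos φ) • P_x + (i sin φ) • P_y` is unitary: the Cayley graph of `D_n` with
generating set `{x, y}` admits a homogeneous scalar quantum walk. -/
theorem dihedral_walk (n : ℕ) [NeZero n] (hn : 3 ≤ n) :
    (DihedralGroup.r 1 * (DihedralGroup.sr 0 : DihedralGroup n)⁻¹ =
      DihedralGroup.sr 0 * (DihedralGroup.r 1 : DihedralGroup n)⁻¹) ∧
    ∀ φ : ℝ,
      ((Real.cos φ : ℂ) • rightMulMatrix (DihedralGroup.r 1 : DihedralGroup n) +
        (Complex.I * Real.sin φ) •
          rightMulMatrix (DihedralGroup.sr 0 : DihedralGroup n)) ∈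
        Matrix.unitaryGroup (DihedralGroup n) ℂ := by
  have hy : (DihedralGroup.sr 0 : DihedralGroup n)⁻¹ = DihedralGroup.sr 0 :=
    inv_eq_of_mul_eq_one_right (DihedralGroup.sr_mul_self 0)
  have hxi : (DihedralGroup.r 1 : DihedralGroup n)⁻¹ = DihedralGroup.r (-1) := by
    apply inv_eq_of_mul_eq_one_right
    rw [DihedralGroup.r_mul_r]
    rw [add_neg_cancel, DihedralGroup.r_zero]
  constructor
  · rw [hy, hxi, DihedralGroup.r_mul_sr, DihedralGroup.sr_mul_r]
    simp
  · intro φ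
    apply key
    rw [hy, hxi, DihedralGroup.r_mul_sr, DihedralGroup.sr_mul_r]
    simp
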